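/- Let a, b, c be integers with 0 ≤ a, b < c, c ≥ 1, and let d = (1−a−b) mod c. Then the tetrahedron T_{a,b,c} is clean (contains no point of ℤ³ on its boundary other than its four vertices) if and only if gcd(a,c) = gcd(b,c) = gcd(d,c) = 1. -/

import Mathlib

/-- A point of `ℝ³` is a lattice point if all of its coordinates are integers. -/
def IsLatticePt (x : Fin 3 → ℝ) : Prop := ∀ i, ∃ m : ℤ, x i = (m : ℝ)

/-- The tetrahedron `T_{a,b,c}`: the convex hull of `(0,0,0)`, `(1,0,0)`, `(0,1,0)`, `(a,b,c)`. -/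
def Tet (a b c : ℤ) : Set (Fin 3 → ℝ) :=
  convexHull ℝ {![0,0,0], ![1,0,0], ![0,1,0], ![(a : ℝ), (b : ℝ), (c : ℝ)]}

/-- `T_{a,b,c}` is an empty lattice tetrahedron: it contains no point of `ℤ³`
other than its four vertices. -/
def TetIsEmpty (a b c : ℤ) : Prop :=
  ∀ x ∈ Tet a b c, IsLatticePt x →
    x = ![0,0,0] ∨ x = ![1,0,0] ∨ x = ![0,1,0] ∨ x = ![(a : ℝ), (b : ℝ), (c : ℝ)]

/-- `T_{a,b,c}` is a clean lattice tetrahedron: it contains no point of `ℤ³` on its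
boundary other than its four vertices. -/
def TetIsClean (a b c : ℤ) : Prop :=
  ∀ x ∈ frontier (Tet a b c), IsLatticePt x →
    x = ![0,0,0] ∨ x = ![1,0,0] ∨ x = ![0,1,0] ∨ x = ![(a : ℝ), (b : ℝ), (c : ℝ)]

def Sset (a b c : ℤ) : Set (Fin 3 → ℝ) :=
  {x | 0 ≤ x 2 ∧ (a:ℝ) * x 2 ≤ c * x 0 ∧ (b:ℝ) * x 2 ≤ c * x 1 ∧
       (c:ℝ) * (x 0 + x 1) ≤ c + ((a:ℝ) + b - 1) * x 2}

def Uset (a b c : ℤ) : Set (Fin 3 → ℝ) :=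
  {x | 0 < x 2 ∧ (a:ℝ) * x 2 < c * x 0 ∧ (b:ℝ) * x 2 < c * x 1 ∧
       (c:ℝ) * (x 0 + x 1) < c + ((a:ℝ) + b - 1) * x 2}

theorem tet_eq (a b c : ℤ) (ha : 0 ≤ a) (hb : 0 ≤ b) (hc : 1 ≤ c) :
    Tet a b c = Sset a b c := by
  have hcR : (0:ℝ) < c := by exact_mod_cast hc
  have haR : (0:ℝ) ≤ a := by exact_mod_cast ha
  have hbR : (0:ℝ) ≤ b := by exact_mod_cast hb
  apply le_antisymm
  · apply convexHull_min
    · intro x hx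
      simp only [Set.mem_insert_iff, Set.mem_singleton_iff] at hx
      rcases hx with rfl | rfl | rfl | rfl <;>
        simp only [Sset, Set.mem_setOf_eq, Matrix.cons_val_zero, Matrix.cons_val_one,
          Matrix.head_cons, Matrix.cons_val_two, Matrix.tail_cons] <;>
        refine ⟨?_, ?_, ?_, ?_⟩ <;> nlinarith
    · intro x hx y hy u v hu hv huv
      obtain ⟨h1,h2,h3,h4⟩ := hx
      obtain ⟨g1,g2,g3,g4⟩ := hy
      refine ⟨?_,?_,?_,?_⟩ <;>
        simp only [Pi.add_apply, Pi.smul_apply, smul_eq_mul] <;> nlinarith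
  · intro x hx
    obtain ⟨h1,h2,h3,h4⟩ := hx
    set w : Fin 4 → ℝ :=
      ![((c:ℝ) - c * x 0 - c * x 1 + ((a:ℝ) + b - 1) * x 2)/c,
        ((c:ℝ) * x 0 - a * x 2)/c, ((c:ℝ) * x 1 - b * x 2)/c, x 2 / c] with hw
    set p : Fin 4 → (Fin 3 → ℝ) :=
      ![![0,0,0], ![1,0,0], ![0,1,0], ![(a : ℝ), (b : ℝ), (c : ℝ)]] with hp
    have hx_eq : x = ∑ i : Fin 4, w i • p i := by
      funext j
      fin_cases j <;>
        simp [hw, hp, Fin.sum_univ_four] <;> field_simp <;> ring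
    rw [hx_eq]
    apply Convex.sum_mem (convex_convexHull ℝ _)
    · intro i _
      fin_cases i <;> simp [hw] <;> [skip; skip; skip; positivity] <;>
        apply div_nonneg _ hcR.le <;> linarith
    · rw [Fin.sum_univ_four]; simp only [hw, Matrix.cons_val_zero, Matrix.cons_val_one, Matrix.head_cons,
        Matrix.cons_val_two, Matrix.tail_cons, Matrix.cons_val_three]
      field_simp
      ring
    · intro i _
      apply subset_convexHull
      fin_cases i <;> simp [hp]

theorem Sset_closed (a b c : ℤ) : IsClosed (Sset a b c) := by
  have h2 : Continuous fun x : Fin 3 → ℝ => x 2 := continuous_apply 2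
  have h0 : Continuous fun x : Fin 3 → ℝ => x 0 := continuous_apply 0
  have h1 : Continuous fun x : Fin 3 → ℝ => x 1 := continuous_apply 1
  have : Sset a b c = {x : Fin 3 → ℝ | 0 ≤ x 2} ∩ ({x | (a:ℝ) * x 2 ≤ c * x 0} ∩
      ({x | (b:ℝ) * x 2 ≤ c * x 1} ∩ {x | (c:ℝ) * (x 0 + x 1) ≤ c + ((a:ℝ) + b - 1) * x 2})) := by
    ext x; simp [Sset, Set.mem_setOf_eq, and_assoc]
  rw [this]
  exact (isClosed_le continuous_const h2).inter
    ((isClosed_le (by fun_prop) (by fun_prop)).inter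
      ((isClosed_le (by fun_prop) (by fun_prop)).inter (isClosed_le (by fun_prop) (by fun_prop))))

theorem Uset_open (a b c : ℤ) : IsOpen (Uset a b c) := by
  have : Uset a b c = {x : Fin 3 → ℝ | 0 < x 2} ∩ ({x | (a:ℝ) * x 2 < c * x 0} ∩
      ({x | (b:ℝ) * x 2 < c * x 1} ∩ {x | (c:ℝ) * (x 0 + x 1) < c + ((a:ℝ) + b - 1) * x 2})) := by
    ext x; simp [Uset, Set.mem_setOf_eq, and_assoc]
  rw [this]
  exact (isOpen_lt continuous_const (continuous_apply 2)).inter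
    ((isOpen_lt (by fun_prop) (by fun_prop)).inter
      ((isOpen_lt (by fun_prop) (by fun_prop)).inter (isOpen_lt (by fun_prop) (by fun_prop))))

theorem interior_tet (a b c : ℤ) (ha : 0 ≤ a) (hb : 0 ≤ b) (hc : 1 ≤ c) :
    interior (Tet a b c) = Uset a b c := by
  have hcR : (0:ℝ) < c := by exact_mod_cast hc
  apply le_antisymm
  · intro x hx
    obtain ⟨ε, hε, hball⟩ := Metric.mem_nhds_iff.mp (mem_interior_iff_mem_nhds.mp hx)
    have perturb : ∀ (j : Fin 3) (t : ℝ), |t| < ε →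
        Function.update x j (x j + t) ∈ Sset a b c := by
      intro j t ht
      rw [← tet_eq a b c ha hb hc]
      apply hball
      rw [Metric.mem_ball, dist_pi_lt_iff hε]
      intro i
      rcases eq_or_ne i j with rfl | hij
      · simpa [Real.dist_eq] using ht
      · simp [Function.update_of_ne hij, hε]
    have e1 := perturb 2 (-(ε/2)) (by rw [abs_neg, abs_of_pos (by linarith)]; linarith)
    have e2 := perturb 0 (-(ε/2)) (by rw [abs_neg, abs_of_pos (by linarith)]; linarith)
    have e3 := perturb 1 (-(ε/2)) (by rw [abs_neg, abs_of_pos (by linarith)]; linarith)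
    have e4 := perturb 0 (ε/2) (by rw [abs_of_pos (by linarith)]; linarith)
    simp only [Sset, Set.mem_setOf_eq, Function.update_self,
      Function.update_of_ne (by decide : (0:Fin 3) ≠ 2),
      Function.update_of_ne (by decide : (1:Fin 3) ≠ 2),
      Function.update_of_ne (by decide : (2:Fin 3) ≠ 0),
      Function.update_of_ne (by decide : (1:Fin 3) ≠ 0),
      Function.update_of_ne (by decide : (2:Fin 3) ≠ 1),
      Function.update_of_ne (by decide : (0:Fin 3) ≠ 1)] at e1 e2 e3 e4
    obtain ⟨a1, -, -, -⟩ := e1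
    obtain ⟨-, a2, -, -⟩ := e2
    obtain ⟨-, -, a3, -⟩ := e3
    obtain ⟨-, -, -, a4⟩ := e4
    exact ⟨by linarith, by nlinarith, by nlinarith, by nlinarith⟩
  · rw [tet_eq a b c ha hb hc]
    apply interior_maximal _ (Uset_open a b c)
    intro x hx
    exact ⟨hx.1.le, hx.2.1.le, hx.2.2.1.le, hx.2.2.2.le⟩

theorem frontier_tet (a b c : ℤ) (ha : 0 ≤ a) (hb : 0 ≤ b) (hc : 1 ≤ c) :
    frontier (Tet a b c) = Sset a b c \ Uset a b c := by
  rw [frontier, interior_tet a b c ha hb hc, tet_eq a b c ha hb hc,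
    (Sset_closed a b c).closure_eq]

theorem mem_S_int (a b c X Y k : ℤ) (h0 : 0 ≤ k) (h1 : a * k ≤ c * X)
    (h2 : b * k ≤ c * Y) (h3 : c * (X + Y) ≤ c + (a + b - 1) * k) :
    ![(X:ℝ), (Y:ℝ), (k:ℝ)] ∈ Sset a b c := by
  refine ⟨?_, ?_, ?_, ?_⟩ <;>
    simp only [Matrix.cons_val_zero, Matrix.cons_val_one, Matrix.head_cons,
      Matrix.cons_val_two, Matrix.tail_cons] <;> exact_mod_cast ‹_›

theorem bad_point (a b c : ℤ) (ha : 0 ≤ a) (hb : 0 ≤ b) (hc : 1 ≤ c) (X Y k : ℤ)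
    (hS : ![(X:ℝ), (Y:ℝ), (k:ℝ)] ∈ Sset a b c)
    (hU : ![(X:ℝ), (Y:ℝ), (k:ℝ)] ∉ Uset a b c)
    (hk0 : k ≠ 0) (hkc : k ≠ c) : ¬ TetIsClean a b c := by
  intro hclean
  have hfr : ![(X:ℝ), (Y:ℝ), (k:ℝ)] ∈ frontier (Tet a b c) := by
    rw [frontier_tet a b c ha hb hc]; exact ⟨hS, hU⟩
  have hlat : IsLatticePt ![(X:ℝ), (Y:ℝ), (k:ℝ)] := by
    intro i; fin_cases i
    · exact ⟨X, by simp⟩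
    · exact ⟨Y, by simp⟩
    · exact ⟨k, by simp⟩
  rcases hclean _ hfr hlat with h | h | h | h <;>
    · have h2 := congrFun h 2
      simp only [Matrix.cons_val_two, Matrix.tail_cons, Matrix.head_cons] at h2
      first
      | exact hk0 (by exact_mod_cast h2)
      | exact hkc (by exact_mod_cast h2)

theorem unclean_a (a b c : ℤ) (ha : 0 ≤ a) (hb : 0 ≤ b) (hc : 1 ≤ c)
    (hg : Int.gcd a c ≠ 1) : ¬ TetIsClean a b c := by
  set G : ℤ := (Int.gcd a c : ℤ) with hG
  have hGdc : G ∣ c := Int.gcd_dvd_right a c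
  have hGda : G ∣ a := Int.gcd_dvd_left a c
  have hn : 2 ≤ Int.gcd a c := by
    have h0 : Int.gcd a c ≠ 0 := by
      intro h; rw [Int.gcd_eq_zero_iff] at h; omega
    omega
  have hG2 : (2:ℤ) ≤ G := by rw [hG]; exact_mod_cast hn
  obtain ⟨k, hk⟩ := hGdc
  obtain ⟨X, hX⟩ := hGda
  set Y : ℤ := (b + G - 1) / G with hY
  have hmod1 := Int.emod_nonneg (b + G - 1) (by omega : G ≠ 0)
  have hmod2 := Int.emod_lt_of_pos (b + G - 1) (by omega : 0 < G)
  have hdm := Int.mul_ediv_add_emod (b + G - 1) G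
  have hYlb : b ≤ G * Y := by rw [hY]; linarith
  have hYub : G * Y ≤ b + G - 1 := by rw [hY]; linarith
  have hk1 : 1 ≤ k := by nlinarith
  have hkc : k ≠ c := by intro h; rw [h] at hk; nlinarith
  have heq : a * k = c * X := by rw [hX, hk]; ring
  apply bad_point a b c ha hb hc X Y k
  · apply mem_S_int
    · omega
    · exact le_of_eq heq
    · rw [hk]
      nlinarith [mul_le_mul_of_nonneg_left hYlb (by omega : (0:ℤ) ≤ k)]
    · rw [hk, hX]
      nlinarith [mul_le_mul_of_nonneg_left hYub (by omega : (0:ℤ) ≤ k)]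
  · intro hU
    have h2 := hU.2.1
    simp only [Matrix.cons_val_zero, Matrix.cons_val_two, Matrix.tail_cons,
      Matrix.head_cons] at h2
    have : a * k < c * X := by exact_mod_cast h2
    omega
  · omega
  · exact hkc

theorem unclean_b (a b c : ℤ) (ha : 0 ≤ a) (hb : 0 ≤ b) (hc : 1 ≤ c)
    (hg : Int.gcd b c ≠ 1) : ¬ TetIsClean a b c := by
  set G : ℤ := (Int.gcd b c : ℤ) with hG
  have hGdc : G ∣ c := Int.gcd_dvd_right b c
  have hGdb : G ∣ b := Int.gcd_dvd_left b c
  have hn : 2 ≤ Int.gcd b c := by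
    have h0 : Int.gcd b c ≠ 0 := by
      intro h; rw [Int.gcd_eq_zero_iff] at h; omega
    omega
  have hG2 : (2:ℤ) ≤ G := by rw [hG]; exact_mod_cast hn
  obtain ⟨k, hk⟩ := hGdc
  obtain ⟨Y, hYd⟩ := hGdb
  set X : ℤ := (a + G - 1) / G with hXdef
  have hmod1 := Int.emod_nonneg (a + G - 1) (by omega : G ≠ 0)
  have hmod2 := Int.emod_lt_of_pos (a + G - 1) (by omega : 0 < G)
  have hdm := Int.mul_ediv_add_emod (a + G - 1) G
  have hXlb : a ≤ G * X := by rw [hXdef]; linarith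
  have hXub : G * X ≤ a + G - 1 := by rw [hXdef]; linarith
  have hk1 : 1 ≤ k := by nlinarith
  have hkc : k ≠ c := by intro h; rw [h] at hk; nlinarith
  have heq : b * k = c * Y := by rw [hYd, hk]; ring
  apply bad_point a b c ha hb hc X Y k
  · apply mem_S_int
    · omega
    · rw [hk]
      nlinarith [mul_le_mul_of_nonneg_left hXlb (by omega : (0:ℤ) ≤ k)]
    · exact le_of_eq heq
    · rw [hk, hYd]
      nlinarith [mul_le_mul_of_nonneg_left hXub (by omega : (0:ℤ) ≤ k)]
  · intro hU
    have h2 := hU.2.2.1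
    simp only [Matrix.cons_val_one, Matrix.cons_val_two, Matrix.tail_cons,
      Matrix.head_cons, Matrix.cons_val_zero] at h2
    have : b * k < c * Y := by exact_mod_cast h2
    omega
  · omega
  · exact hkc

theorem unclean_d (a b c : ℤ) (ha : 0 ≤ a) (hb : 0 ≤ b) (hc : 1 ≤ c)
    (hg : Int.gcd (a + b - 1) c ≠ 1) : ¬ TetIsClean a b c := by
  set G : ℤ := (Int.gcd (a + b - 1) c : ℤ) with hG
  have hGdc : G ∣ c := Int.gcd_dvd_right (a + b - 1) c
  have hGdw : G ∣ (a + b - 1) := Int.gcd_dvd_left (a + b - 1) c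
  have hn : 2 ≤ Int.gcd (a + b - 1) c := by
    have h0 : Int.gcd (a + b - 1) c ≠ 0 := by
      intro h; rw [Int.gcd_eq_zero_iff] at h; omega
    omega
  have hG2 : (2:ℤ) ≤ G := by rw [hG]; exact_mod_cast hn
  obtain ⟨k, hk⟩ := hGdc
  obtain ⟨W, hW⟩ := hGdw
  set X : ℤ := (a + G - 1) / G with hXdef
  have hmod1 := Int.emod_nonneg (a + G - 1) (by omega : G ≠ 0)
  have hmod2 := Int.emod_lt_of_pos (a + G - 1) (by omega : 0 < G)
  have hdm := Int.mul_ediv_add_emod (a + G - 1) G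
  have hXlb : a ≤ G * X := by rw [hXdef]; linarith
  have hXub : G * X ≤ a + G - 1 := by rw [hXdef]; linarith
  set Y : ℤ := 1 + W - X with hYdef
  have hk1 : 1 ≤ k := by nlinarith
  have hkc : k ≠ c := by intro h; rw [h] at hk; nlinarith
  have heq : c * (X + Y) = c + (a + b - 1) * k := by
    rw [hYdef, hk, hW]; ring
  apply bad_point a b c ha hb hc X Y k
  · apply mem_S_int
    · omega
    · rw [hk]
      nlinarith [mul_le_mul_of_nonneg_left hXlb (by omega : (0:ℤ) ≤ k)]
    · -- b * k ≤ c * Y ; G * Y = G + G*W - G*X = G + (a+b-1) - G*X ≥ G + a+b-1 - (a+G-1) = b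
      rw [hk, hYdef]
      nlinarith [mul_le_mul_of_nonneg_left hXub (by omega : (0:ℤ) ≤ k), hW]
    · exact le_of_eq heq
  · intro hU
    have h2 := hU.2.2.2
    simp only [Matrix.cons_val_zero, Matrix.cons_val_one, Matrix.cons_val_two,
      Matrix.tail_cons, Matrix.head_cons] at h2
    have : c * (X + Y) < c + (a + b - 1) * k := by exact_mod_cast h2
    omega
  · omega
  · exact hkc

theorem clean_of_gcd (a b c : ℤ) (ha : 0 ≤ a) (hac : a < c) (hb : 0 ≤ b) (hbc : b < c)
    (hc : 1 ≤ c) (h1 : Int.gcd a c = 1) (h2 : Int.gcd b c = 1)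
    (h3 : Int.gcd (a + b - 1) c = 1) : TetIsClean a b c := by
  have hcpos : (0:ℤ) < c := hc
  intro x hx hlat
  rw [frontier_tet a b c ha hb hc] at hx
  obtain ⟨hS, hU⟩ := hx
  obtain ⟨m, hm⟩ := hlat 0
  obtain ⟨n, hn⟩ := hlat 1
  obtain ⟨k, hk⟩ := hlat 2
  obtain ⟨s0, s1, s2, s3⟩ := hS
  rw [hk] at s0 s1 s2 s3
  rw [hm] at s1 s3
  rw [hn] at s2 s3
  have i0 : 0 ≤ k := by exact_mod_cast s0
  have i1 : a * k ≤ c * m := by exact_mod_cast s1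
  have i2 : b * k ≤ c * n := by exact_mod_cast s2
  have i3 : c * (m + n) ≤ c + (a + b - 1) * k := by exact_mod_cast s3
  have hcases : k = 0 ∨ a * k = c * m ∨ b * k = c * n ∨
      c * (m + n) = c + (a + b - 1) * k := by
    by_contra hcon
    push_neg at hcon
    obtain ⟨c0, c1, c2, c3⟩ := hcon
    apply hU
    refine ⟨?_, ?_, ?_, ?_⟩
    · rw [hk]; exact_mod_cast lt_of_le_of_ne i0 (Ne.symm c0)
    · rw [hk, hm]; exact_mod_cast lt_of_le_of_ne i1 c1
    · rw [hk, hn]; exact_mod_cast lt_of_le_of_ne i2 c2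
    · rw [hk, hm, hn]; exact_mod_cast lt_of_le_of_ne i3 c3
  have hcancel : ∀ u v : ℤ, c * u ≤ c * v → u ≤ v := fun u v h =>
    le_of_mul_le_mul_left h hcpos
  have hdist : ∀ u v : ℤ, c * (u + v) = c * u + c * v := fun u v => by ring
  -- goal-closing helpers
  have vert0 : m = 0 → n = 0 → k = 0 →
      x = ![0,0,0] ∨ x = ![1,0,0] ∨ x = ![0,1,0] ∨ x = ![(a:ℝ),(b:ℝ),(c:ℝ)] := by
    intro e1 e2 e3; left; funext j; fin_cases j <;> simp [hm, hn, hk, e1, e2, e3]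
  have vert1 : m = 1 → n = 0 → k = 0 →
      x = ![0,0,0] ∨ x = ![1,0,0] ∨ x = ![0,1,0] ∨ x = ![(a:ℝ),(b:ℝ),(c:ℝ)] := by
    intro e1 e2 e3; right; left; funext j; fin_cases j <;> simp [hm, hn, hk, e1, e2, e3]
  have vert2 : m = 0 → n = 1 → k = 0 →
      x = ![0,0,0] ∨ x = ![1,0,0] ∨ x = ![0,1,0] ∨ x = ![(a:ℝ),(b:ℝ),(c:ℝ)] := by
    intro e1 e2 e3; right; right; left; funext j; fin_cases j <;> simp [hm, hn, hk, e1, e2, e3]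
  have vert3 : m = a → n = b → k = c →
      x = ![0,0,0] ∨ x = ![1,0,0] ∨ x = ![0,1,0] ∨ x = ![(a:ℝ),(b:ℝ),(c:ℝ)] := by
    intro e1 e2 e3; right; right; right; funext j; fin_cases j <;> simp [hm, hn, hk, e1, e2, e3]
  -- case k = 0, generic (uses only the inequalities)
  have base : k = 0 →
      x = ![0,0,0] ∨ x = ![1,0,0] ∨ x = ![0,1,0] ∨ x = ![(a:ℝ),(b:ℝ),(c:ℝ)] := by
    intro hk0
    subst hk0
    have hm0 : 0 ≤ m := hcancel 0 m (by linarith)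
    have hn0 : 0 ≤ n := hcancel 0 n (by linarith)
    have hmn : m + n ≤ 1 := hcancel (m + n) 1 (by linarith)
    rcases (by omega : (m = 0 ∧ n = 0) ∨ (m = 1 ∧ n = 0) ∨ (m = 0 ∧ n = 1)) with
      ⟨e1, e2⟩ | ⟨e1, e2⟩ | ⟨e1, e2⟩
    · exact vert0 e1 e2 rfl
    · exact vert1 e1 e2 rfl
    · exact vert2 e1 e2 rfl
  rcases hcases with hk0 | he | he | he
  · exact base hk0
  · -- a*k = c*m, use gcd a c = 1
    have hdvd : c ∣ k :=
      Int.dvd_of_dvd_mul_left_of_gcd_one (show c ∣ k * a from ⟨m, by linear_combination he⟩)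
        (by rwa [Int.gcd_comm])
    obtain ⟨t, ht⟩ := hdvd
    have hkle : k ≤ c := by
      linarith [hdist m n, show (a+b-1)*k = a*k + b*k - k from by ring]
    have ht0 : 0 ≤ t := hcancel 0 t (by rw [mul_zero, ← ht]; exact i0)
    have ht1 : t ≤ 1 := hcancel t 1 (by rw [mul_one, ← ht]; exact hkle)
    rcases (by omega : t = 0 ∨ t = 1) with rfl | rfl
    · exact base (by omega)
    · rw [mul_one] at ht
      rw [ht] at he i2 i3
      have hma : m = a := by
        have : c * a = c * m := by linarith [mul_comm a c]
        exact (mul_left_cancel₀ (by omega) this).symm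
      have hnb : n = b := by
        have hnb1 : b ≤ n := hcancel b n (by linarith [mul_comm b c])
        have hnb2 : n ≤ b := hcancel n b (by
          linarith [hdist m n, show (a+b-1)*c = a*c + b*c - c from by ring,
            mul_comm a c, mul_comm b c])
        omega
      exact vert3 hma hnb ht
  · -- b*k = c*n, use gcd b c = 1
    have hdvd : c ∣ k :=
      Int.dvd_of_dvd_mul_left_of_gcd_one (show c ∣ k * b from ⟨n, by linear_combination he⟩)
        (by rwa [Int.gcd_comm])
    obtain ⟨t, ht⟩ := hdvd
    have hkle : k ≤ c := by
      linarith [hdist m n, show (a+b-1)*k = a*k + b*k - k from by ring]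
    have ht0 : 0 ≤ t := hcancel 0 t (by rw [mul_zero, ← ht]; exact i0)
    have ht1 : t ≤ 1 := hcancel t 1 (by rw [mul_one, ← ht]; exact hkle)
    rcases (by omega : t = 0 ∨ t = 1) with rfl | rfl
    · exact base (by omega)
    · rw [mul_one] at ht
      rw [ht] at he i1 i3
      have hnb : n = b := by
        have : c * b = c * n := by linarith [mul_comm b c]
        exact (mul_left_cancel₀ (by omega) this).symm
      have hma : m = a := by
        have hma1 : a ≤ m := hcancel a m (by linarith [mul_comm a c])
        have hma2 : m ≤ a := hcancel m a (by
          linarith [hdist m n, show (a+b-1)*c = a*c + b*c - c from by ring,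
            mul_comm a c, mul_comm b c])
        omega
      exact vert3 hma hnb ht
  · -- c*(m+n) = c + (a+b-1)*k, use gcd (a+b-1) c = 1
    have hdvd : c ∣ k :=
      Int.dvd_of_dvd_mul_left_of_gcd_one
        (show c ∣ k * (a + b - 1) from ⟨m + n - 1, by linear_combination -he⟩)
        (by rwa [Int.gcd_comm])
    obtain ⟨t, ht⟩ := hdvd
    have hkle : k ≤ c := by
      linarith [hdist m n, show (a+b-1)*k = a*k + b*k - k from by ring]
    have ht0 : 0 ≤ t := hcancel 0 t (by rw [mul_zero, ← ht]; exact i0)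
    have ht1 : t ≤ 1 := hcancel t 1 (by rw [mul_one, ← ht]; exact hkle)
    rcases (by omega : t = 0 ∨ t = 1) with rfl | rfl
    · exact base (by omega)
    · rw [mul_one] at ht
      rw [ht] at he i1 i2
      have hma1 : a ≤ m := hcancel a m (by linarith [mul_comm a c])
      have hnb1 : b ≤ n := hcancel b n (by linarith [mul_comm b c])
      have hsum : m + n = a + b := by
        have : c * (m + n) = c * (a + b) := by
          linarith [show c + (a+b-1)*c = c*(a+b) from by ring]
        exact mul_left_cancel₀ (by omega) this
      exact vert3 (by omega) (by omega) ht
theorem gcd_d_iff (a b c d : ℤ) (hd : d = (1 - a - b) % c) :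
    Int.gcd d c = 1 ↔ Int.gcd (a + b - 1) c = 1 := by
  rw [← Int.isCoprime_iff_gcd_eq_one, ← Int.isCoprime_iff_gcd_eq_one]
  have hdd : d = -(a + b - 1) + c * (-((1 - a - b) / c)) := by
    rw [hd, Int.emod_def]; ring
  constructor
  · intro h
    rw [hdd] at h
    have h2 := IsCoprime.of_add_mul_left_left h
    exact (IsCoprime.neg_left_iff _ _).mp h2
  · intro h
    have h2 := ((IsCoprime.neg_left_iff _ _).mpr h).add_mul_left_left (-((1 - a - b) / c))
    rwa [← hdd] at h2


/-- Let `0 ≤ a, b < c`, `c ≥ 1`, and `d = (1 - a - b) mod c`. The tetrahedron `T_{a,b,c}`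
is clean if and only if `gcd(a,c) = gcd(b,c) = gcd(d,c) = 1`. -/
theorem stmt_9 (a b c d : ℤ) (ha : 0 ≤ a) (hac : a < c) (hb : 0 ≤ b) (hbc : b < c)
    (hc : 1 ≤ c) (hd : d = (1 - a - b) % c) :
    TetIsClean a b c ↔ (Int.gcd a c = 1 ∧ Int.gcd b c = 1 ∧ Int.gcd d c = 1) := by
  have hd1 := gcd_d_iff a b c d hd
  constructor
  · intro hclean
    refine ⟨?_, ?_, ?_⟩ <;> by_contra hg
    · exact unclean_a a b c ha hb hc hg hclean
    · exact unclean_b a b c ha hb hc hg hclean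
    · exact unclean_d a b c ha hb hc (fun h => hg (hd1.mpr h)) hclean
  · rintro ⟨g1, g2, g3⟩
    exact clean_of_gcd a b c ha hac hb hbc hc g1 g2 (hd1.mp g3)
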